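/- Let θ < θ' be real numbers and g₁, g₂ ∈ SL(2,ℤ) with rk(g₁,θ) > 0, rk(g₂,θ) > 0, and deg(g₂g₁⁻¹) > 0. Then it is impossible that rk(g₁,θ') > 0 and rk(g₂,θ') < 0. (Equivalently, only the sign patterns (+,+), (−,+), (−,−) for (rk(g₁,θ'), rk(g₂,θ')) may occur.) -/
import Mathlib

noncomputable section

/-- The lower-left entry of `g ∈ SL(2,ℤ)`. -/
def sl2Deg (g : Matrix.SpecialLinearGroup (Fin 2) ℤ) : ℤ := g.1 1 0

/-- `rk(g,θ) = cθ + d` where `(c,d)` is the bottom row of `g`. -/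
def sl2Rk (g : Matrix.SpecialLinearGroup (Fin 2) ℤ) (θ : ℝ) : ℝ :=
  (g.1 1 0 : ℝ) * θ + (g.1 1 1 : ℝ)

/-- The fractional-linear action `gθ = (aθ+b)/(cθ+d)`. -/
def sl2Act (g : Matrix.SpecialLinearGroup (Fin 2) ℤ) (θ : ℝ) : ℝ :=
  ((g.1 0 0 : ℝ) * θ + (g.1 0 1 : ℝ)) / ((g.1 1 0 : ℝ) * θ + (g.1 1 1 : ℝ))

/-- If `θ < θ'`, `rk(g₁,θ) > 0`, `rk(g₂,θ) > 0` and `deg(g₂g₁⁻¹) > 0`, then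
it is impossible that `rk(g₁,θ') > 0` and `rk(g₂,θ') < 0`. -/
theorem stmt4 (θ θ' : ℝ) (hlt : θ < θ')
    (g₁ g₂ : Matrix.SpecialLinearGroup (Fin 2) ℤ)
    (h₁ : 0 < sl2Rk g₁ θ) (h₂ : 0 < sl2Rk g₂ θ)
    (hdeg : 0 < sl2Deg (g₂ * g₁⁻¹)) :
    ¬ (0 < sl2Rk g₁ θ' ∧ sl2Rk g₂ θ' < 0) := by
  rintro ⟨h₁', h₂'⟩
  have hd : (sl2Deg (g₂ * g₁⁻¹)) =
      g₂.1 1 0 * g₁.1 1 1 - g₁.1 1 0 * g₂.1 1 1 := by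
    simp [sl2Deg, Matrix.SpecialLinearGroup.coe_mul,
      Matrix.SpecialLinearGroup.coe_inv, Matrix.adjugate_fin_two,
      Matrix.mul_apply, Fin.sum_univ_two]
    ring
  have hdR : (0:ℝ) < (g₂.1 1 0 : ℝ) * (g₁.1 1 1 : ℝ) - (g₁.1 1 0 : ℝ) * (g₂.1 1 1 : ℝ) := by
    have := hdeg
    rw [hd] at this
    exact_mod_cast this
  have key : sl2Rk g₂ θ' * sl2Rk g₁ θ - sl2Rk g₂ θ * sl2Rk g₁ θ' =
      (θ' - θ) * ((g₂.1 1 0 : ℝ) * (g₁.1 1 1 : ℝ) - (g₁.1 1 0 : ℝ) * (g₂.1 1 1 : ℝ)) := by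
    simp only [sl2Rk]; ring
  nlinarith [mul_pos h₂ h₁', mul_pos (sub_pos.2 hlt) hdR,
    mul_pos (neg_pos.2 h₂') h₁]

end
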